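/- With X = ℝ, A = B = [0,∞), Φ_A(x) = [0,∞), and Φ_B(x,a) = [φ_B(x,a), ∞) where φ_B is as above, the multifunction Φ_B is lower semi-continuous on Gr(Φ_A) = ℝ × [0,∞) (in the sequential sense: for every (x_n,a_n) → (x,a) in ℝ × [0,∞) and b ∈ Φ_B(x,a), there are b_n ∈ Φ_B(x_n,a_n) with b_n → b). -/

import Mathlib

open Filter Topology

noncomputable def phiB (x a : ℝ) : ℝ :=
  if x ≤ 0 then 0
  else if a < 1 / (2 * x) then 0
  else if a ≤ 1 / x then 2 * (2 * x + 1) * a - 2 - 1 / x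
  else 2 + 1 / x

lemma phiB_eq (x a : ℝ) (hx : 0 < x) :
    phiB x a = min (max (2 * (2 * x + 1) * a - 2 - 1 / x) 0) (2 + 1 / x) := by
  have hx' : ¬ x ≤ 0 := not_le.mpr hx
  have hinv : x * (1 / x) = 1 := by field_simp
  unfold phiB
  rw [if_neg hx']
  split_ifs with h1 h2
  · have h1' : 2 * x * a < 1 := by
      rw [lt_div_iff₀ (by positivity)] at h1; linarith
    have he : 2 * (2 * x + 1) * a - 2 - 1 / x ≤ 0 := by nlinarith [hinv, hx, h1']
    rw [max_eq_right he, min_eq_left (by positivity)]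
  · push_neg at h1
    have h1' : 1 ≤ 2 * x * a := by rw [div_le_iff₀ (by positivity)] at h1; linarith
    have h2' : x * a ≤ 1 := by rw [le_div_iff₀ hx] at h2; linarith
    have he0 : 0 ≤ 2 * (2 * x + 1) * a - 2 - 1 / x := by
      nlinarith [hinv, hx, mul_nonneg (by linarith : (0:ℝ) ≤ 2 * x + 1) (by linarith : (0:ℝ) ≤ 2 * x * a - 1)]
    have heU : 2 * (2 * x + 1) * a - 2 - 1 / x ≤ 2 + 1 / x := by
      nlinarith [hinv, hx, mul_nonneg (by linarith : (0:ℝ) ≤ 4 * x + 2) (by linarith : (0:ℝ) ≤ 1 - x * a)]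
    rw [max_eq_left he0, min_eq_left heU]
  · push_neg at h2
    have h2' : 1 < x * a := by rw [div_lt_iff₀ hx] at h2; linarith
    have hL : 2 + 1 / x ≤ 2 * (2 * x + 1) * a - 2 - 1 / x := by
      nlinarith [hinv, hx, mul_nonneg (by linarith : (0:ℝ) ≤ 4 * x + 2) (by linarith : (0:ℝ) ≤ x * a - 1)]
    have hp : (0:ℝ) ≤ 2 + 1 / x := by positivity
    rw [max_eq_left (by linarith), min_eq_right hL]

/-- The multifunction `Φ_B(x,a) = [φ_B(x,a), ∞)` of the example is lower
semi-continuous on `Gr(Φ_A) = ℝ × [0, ∞)` (sequential sense). -/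
theorem phiB_multifunction_lsc :
    ∀ (x a : ℝ), 0 ≤ a →
    ∀ (xs as : ℕ → ℝ), (∀ n, 0 ≤ as n) →
    Tendsto (fun n => ((xs n, as n) : ℝ × ℝ)) atTop (𝓝 (x, a)) →
    ∀ b ∈ Set.Ici (phiB x a),
    ∃ bs : ℕ → ℝ, (∀ n, bs n ∈ Set.Ici (phiB (xs n) (as n))) ∧
      Tendsto bs atTop (𝓝 b) := by
  intro x a ha xs as has htend b hb
  have hb' : phiB x a ≤ b := hb
  have hxs : Tendsto xs atTop (𝓝 x) := by
    have := (continuous_fst.tendsto (x, a)).comp htend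
    exact this
  have has' : Tendsto as atTop (𝓝 a) := by
    have := (continuous_snd.tendsto (x, a)).comp htend
    exact this
  suffices key : Tendsto (fun n => phiB (xs n) (as n)) atTop (𝓝 (phiB x a)) by
    refine ⟨fun n => max (phiB (xs n) (as n)) b, fun n => Set.mem_Ici.mpr (le_max_left _ _), ?_⟩
    have h := key.max (tendsto_const_nhds : Tendsto (fun _ : ℕ => b) atTop (𝓝 b))
    rwa [max_eq_right hb'] at h
  rcases lt_trichotomy x 0 with hx | hx | hx
  · -- x < 0 : eventually xs n < 0
    have h0 : phiB x a = 0 := by unfold phiB; rw [if_pos hx.le]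
    rw [h0]
    have hev : ∀ᶠ n in atTop, phiB (xs n) (as n) = 0 := by
      filter_upwards [hxs (Iio_mem_nhds hx)] with n hn
      unfold phiB
      rw [if_pos (le_of_lt hn)]
    exact tendsto_const_nhds.congr' (by filter_upwards [hev] with n h using h.symm)
  · -- x = 0
    subst hx
    have h0 : phiB 0 a = 0 := by unfold phiB; rw [if_pos le_rfl]
    rw [h0]
    have hprod : Tendsto (fun n => 2 * xs n * as n) atTop (𝓝 (2 * 0 * a)) :=
      (hxs.const_mul 2).mul has'
    have hz : (2:ℝ) * 0 * a = 0 := by ring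
    rw [hz] at hprod
    have hev : ∀ᶠ n in atTop, phiB (xs n) (as n) = 0 := by
      filter_upwards [hprod (Iio_mem_nhds one_pos)] with n hn
      have hn' : 2 * xs n * as n < 1 := hn
      unfold phiB
      by_cases h : xs n ≤ 0
      · rw [if_pos h]
      · push_neg at h
        have hlt : as n < 1 / (2 * xs n) := by
          rw [lt_div_iff₀ (by linarith)]; nlinarith
        rw [if_neg (not_le.mpr h), if_pos hlt]
    exact tendsto_const_nhds.congr' (by filter_upwards [hev] with n h using h.symm)
  · -- x > 0
    have h1 : Tendsto (fun n => 1 / xs n) atTop (𝓝 (1 / x)) :=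
      Filter.Tendsto.div tendsto_const_nhds hxs hx.ne'
    have he : Tendsto (fun n => 2 * (2 * xs n + 1) * as n - 2 - 1 / xs n) atTop
        (𝓝 (2 * (2 * x + 1) * a - 2 - 1 / x)) :=
      (((tendsto_const_nhds.mul ((tendsto_const_nhds.mul hxs).add
        tendsto_const_nhds)).mul has').sub tendsto_const_nhds).sub h1
    have hcomp : Tendsto
        (fun n => min (max (2 * (2 * xs n + 1) * as n - 2 - 1 / xs n) 0) (2 + 1 / xs n))
        atTop (𝓝 (min (max (2 * (2 * x + 1) * a - 2 - 1 / x) 0) (2 + 1 / x))) :=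
      Filter.Tendsto.min (Filter.Tendsto.max he tendsto_const_nhds)
        (tendsto_const_nhds.add h1)
    have hev : ∀ᶠ n in atTop,
        min (max (2 * (2 * xs n + 1) * as n - 2 - 1 / xs n) 0) (2 + 1 / xs n)
          = phiB (xs n) (as n) := by
      filter_upwards [hxs (Ioi_mem_nhds hx)] with n hn
      exact (phiB_eq (xs n) (as n) hn).symm
    rw [phiB_eq x a hx]
    exact hcomp.congr' hev
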